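/- Let E be a positive semidefinite 4×4 Hermitian matrix satisfying the orthogonality-preservation conditions for the Bell-state set {|ψ_{00}⟩, |ψ_{11}⟩, |ψ_{31}⟩, |ψ_{32}⟩} (so E has the five-parameter form with parameters a_0, a_1, a_2, b_0, b_2). Then the eigenvalues of the normalized average Bob-side state ρ_B = (1/Tr(E)) Σ_{i=1}^{4} (1/4)·Tr_A((√E ⊗ I)|ψ_i⟩⟨ψ_i|(√E ⊗ I)) are (1 ± μ_0/(2a_0))/4 and (1 ± μ_1/(2a_0))/4, where μ_0 = √((a_1+a_2)²+(b_0+b_2)²) and μ_1 = √((a_1−a_2)²+(b_0−b_2)²) and a_0 = Tr(E)/4. -/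

import Mathlib

set_option maxHeartbeats 2000000

open Matrix Polynomial
open scoped Kronecker ComplexOrder

/-- The generalized Bell state `|ψ_{nm}⟩ = (1/√d) ∑_j e^{2πijn/d} |j⟩ ⊗ |j ⊕_d m⟩`. -/
noncomputable def bell (d : ℕ) (n m : Fin d) : Fin d × Fin d → ℂ :=
  fun p => (1 / Real.sqrt d) *
    Complex.exp (2 * Real.pi * Complex.I * (p.1 : ℕ) * (n : ℕ) / d) *
    (if p.2 = p.1 + m then 1 else 0)

/-- The rank-one projection `|ψ⟩⟨ψ|`. -/
noncomputable def outer {ι : Type*} (ψ : ι → ℂ) : Matrix ι ι ℂ :=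
  Matrix.of fun p q => ψ p * star (ψ q)

/-- Partial trace over the first (Alice's) tensor factor. -/
noncomputable def trA {d : ℕ} (ρ : Matrix (Fin d × Fin d) (Fin d × Fin d) ℂ) :
    Matrix (Fin d) (Fin d) ℂ :=
  Matrix.of fun i j => ∑ k : Fin d, ρ (k, i) (k, j)

/-- The indices of the four Bell states `ψ_{00}, ψ_{11}, ψ_{31}, ψ_{32}`. -/
def bellIdx : Fin 4 → Fin 4 × Fin 4 := ![(0, 0), (1, 1), (3, 1), (3, 2)]

/-- The five-parameter effect operator arising from orthogonality preservation. -/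
noncomputable def fiveParam (a0 a1 a2 b0 b2 : ℝ) : Matrix (Fin 4) (Fin 4) ℂ :=
  !![((a0 + a1 + a2 : ℝ) : ℂ), 0, ((b0 + b2 : ℝ) : ℂ), 0;
     0, ((a0 + a1 - a2 : ℝ) : ℂ), 0, ((b0 - b2 : ℝ) : ℂ);
     ((b0 + b2 : ℝ) : ℂ), 0, ((a0 - a1 - a2 : ℝ) : ℂ), 0;
     0, ((b0 - b2 : ℝ) : ℂ), 0, ((a0 - a1 + a2 : ℝ) : ℂ)]

/-- The positive semidefinite square root (as defined in the older Mathlib). -/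
noncomputable def Matrix.PosSemidef.sqrt {n 𝕜 : Type*} [Fintype n] [DecidableEq n] [RCLike 𝕜]
    {A : Matrix n n 𝕜} (hA : A.PosSemidef) : Matrix n n 𝕜 :=
  hA.1.eigenvectorUnitary.1 * diagonal ((↑) ∘ (√·) ∘ hA.1.eigenvalues) *
    (star hA.1.eigenvectorUnitary : Matrix n n 𝕜)

/-- The average Bob-side post-measurement state, normalized to trace one:
`ρ_B = (Tr E)⁻¹ ∑ᵢ Tr_A((√E ⊗ I)|ψᵢ⟩⟨ψᵢ|(√E ⊗ I))`. -/
noncomputable def rhoB (E : Matrix (Fin 4) (Fin 4) ℂ) (hE : E.PosSemidef) :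
    Matrix (Fin 4) (Fin 4) ℂ :=
  (E.trace)⁻¹ • ∑ i : Fin 4,
    trA ((hE.sqrt ⊗ₖ (1 : Matrix (Fin 4) (Fin 4) ℂ)) *
      outer (bell 4 (bellIdx i).1 (bellIdx i).2) *
      (hE.sqrt ⊗ₖ (1 : Matrix (Fin 4) (Fin 4) ℂ)))

lemma Matrix.PosSemidef.sqrt_mul_self {n 𝕜 : Type*} [Fintype n] [DecidableEq n] [RCLike 𝕜]
    {A : Matrix n n 𝕜} (hA : A.PosSemidef) : hA.sqrt * hA.sqrt = A := by
  conv_rhs => rw [hA.1.spectral_theorem, Unitary.conjStarAlgAut_apply]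
  rw [Matrix.PosSemidef.sqrt]
  have hU : (star hA.1.eigenvectorUnitary : Matrix n n 𝕜) * hA.1.eigenvectorUnitary = 1 :=
    Unitary.coe_star_mul_self _
  calc _ = (hA.1.eigenvectorUnitary : Matrix n n 𝕜) *
        (diagonal ((↑) ∘ (√·) ∘ hA.1.eigenvalues) * diagonal ((↑) ∘ (√·) ∘ hA.1.eigenvalues)) *
        (star hA.1.eigenvectorUnitary : Matrix n n 𝕜) := by
        simp only [Matrix.mul_assoc]
        rw [← Matrix.mul_assoc (star _ : Matrix n n 𝕜), hU, Matrix.one_mul]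
    _ = _ := by
        rw [diagonal_mul_diagonal]
        congr 3
        funext i
        simp only [Function.comp_apply]
        rw [← RCLike.ofReal_mul, Real.mul_self_sqrt (hA.eigenvalues_nonneg i)]

lemma expI' : Complex.exp ((Real.pi/2 : ℝ) * Complex.I) = Complex.I := by
  rw [Complex.exp_mul_I]
  simp [← Complex.ofReal_cos, ← Complex.ofReal_sin]

lemma bell_apply' (n m : Fin 4) (p : Fin 4 × Fin 4) :
    bell 4 n m p = (1/2 : ℂ) * Complex.I ^ ((p.1 : ℕ) * (n : ℕ)) *
      (if p.2 = p.1 + m then 1 else 0) := by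
  unfold bell
  have h4 : Real.sqrt ((4:ℕ):ℝ) = 2 := by
    rw [show ((4:ℕ):ℝ) = 2^2 by norm_num, Real.sqrt_sq (by norm_num)]
  have h : (2 * (Real.pi:ℂ) * Complex.I * ((p.1:ℕ):ℂ) * ((n:ℕ):ℂ) / ((4:ℕ):ℂ))
      = (((p.1:ℕ)*(n:ℕ) : ℕ) : ℂ) * (((Real.pi/2 : ℝ):ℂ) * Complex.I) := by
    push_cast; ring
  rw [h4, h, Complex.exp_nat_mul, expI']
  norm_num

lemma trA_sandwich' (S : Matrix (Fin 4) (Fin 4) ℂ) (ψ : Fin 4 × Fin 4 → ℂ) (i j : Fin 4) :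
    trA ((S ⊗ₖ 1) * outer ψ * (S ⊗ₖ 1)) i j
      = ∑ p : Fin 4, ∑ q : Fin 4, (S*S) q p * ψ (p,i) * star (ψ (q,j)) := by
  simp only [trA, Matrix.of_apply, Matrix.mul_apply, outer, Matrix.kroneckerMap_apply,
    Matrix.one_apply, Fintype.sum_prod_type, mul_ite, mul_one, mul_zero, ite_mul, zero_mul,
    Finset.sum_ite_eq, Finset.sum_ite_eq', Finset.mem_univ, if_true,
    Finset.sum_mul, Finset.mul_sum]
  rw [Finset.sum_comm]
  rw [Finset.sum_congr rfl fun (a : Fin 4) _ => Finset.sum_comm]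
  rw [Finset.sum_comm]
  refine Finset.sum_congr rfl fun p _ => Finset.sum_congr rfl fun q _ =>
    Finset.sum_congr rfl fun k _ => by ring

lemma trace_fiveParam' (a0 a1 a2 b0 b2 : ℝ) :
    (fiveParam a0 a1 a2 b0 b2).trace = ((4*a0 : ℝ) : ℂ) := by
  simp [Matrix.trace, fiveParam, Fin.sum_univ_four]
  push_cast
  ring

lemma bell_sum' (E : Matrix (Fin 4) (Fin 4) ℂ) (n m i j : Fin 4) :
    (∑ p : Fin 4, ∑ q : Fin 4, E q p * bell 4 n m (p,i) * star (bell 4 n m (q,j)))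
    = (1/4 : ℂ) * Complex.I ^ (((i-m : Fin 4) : ℕ) * (n : ℕ))
      * star (Complex.I ^ (((j-m : Fin 4) : ℕ) * (n : ℕ))) * E (j-m) (i-m) := by
  have hif : ∀ x y : Fin 4, (if x = y + m then (1:ℂ) else 0) = (if y = x - m then 1 else 0) := by
    intro x y
    congr 1
    rw [← sub_eq_iff_eq_add (a := x)]
    exact propext eq_comm
  simp only [bell_apply', hif, mul_ite, mul_zero, mul_one, ite_mul, zero_mul,
    star_zero, star_mul', star_one, star_div₀, star_ofNat, apply_ite (star : ℂ → ℂ)]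
  simp only [Finset.mul_sum, Finset.sum_mul, mul_ite, mul_zero, ite_mul, zero_mul,
    Finset.sum_ite_eq', Finset.mem_univ, if_true]
  ring

/-- The explicit value of `ρ_B` for the five-parameter family. -/
noncomputable def Rmat (a0 a1 a2 b0 b2 : ℝ) : Matrix (Fin 4) (Fin 4) ℂ :=
  !![((4*a0-2*a1+2*a2)/(16*a0) : ℝ), 0, ((-2*(b0-b2))/(16*a0) : ℝ), 0;
     0, ((4*a0+2*a1+2*a2)/(16*a0) : ℝ), 0, ((-2*(b0+b2))/(16*a0) : ℝ);
     ((-2*(b0-b2))/(16*a0) : ℝ), 0, ((4*a0+2*a1-2*a2)/(16*a0) : ℝ), 0;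
     0, ((-2*(b0+b2))/(16*a0) : ℝ), 0, ((4*a0-2*a1-2*a2)/(16*a0) : ℝ)]

lemma rhoB_eq' (a0 a1 a2 b0 b2 : ℝ) (ha0 : a0 ≠ 0)
    (hE : (fiveParam a0 a1 a2 b0 b2).PosSemidef) :
    rhoB (fiveParam a0 a1 a2 b0 b2) hE = Rmat a0 a1 a2 b0 b2 := by
  ext i j
  rw [rhoB, trace_fiveParam']
  simp only [Matrix.smul_apply, Fin.sum_univ_four, Matrix.add_apply, bellIdx,
    Matrix.cons_val_zero, Matrix.cons_val_one, Matrix.head_cons,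
    Matrix.cons_val_two, Matrix.cons_val_three, Matrix.tail_cons]
  rw [trA_sandwich', trA_sandwich', trA_sandwich', trA_sandwich', hE.sqrt_mul_self]
  have ha0' : ((a0:ℂ)) ≠ 0 := Complex.ofReal_ne_zero.mpr ha0
  rw [bell_sum', bell_sum', bell_sum', bell_sum']
  fin_cases i <;> fin_cases j <;>
    simp only [Fin.zero_eta, Fin.mk_one, show ((⟨2, by omega⟩ : Fin 4)) = 2 from rfl,
      show ((⟨3, by omega⟩ : Fin 4)) = 3 from rfl, id_eq]
  all_goals
    simp [fiveParam, Rmat, show (-1:Fin 4)=3 by decide, show (-2:Fin 4)=2 by decide,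
      show ((0:Fin 4):ℕ)=0 from rfl, show ((1:Fin 4):ℕ)=1 from rfl,
      show ((2:Fin 4):ℕ)=2 from rfl, show ((3:Fin 4):ℕ)=3 from rfl,
      pow_succ, Complex.I_mul_I, Complex.conj_I, smul_eq_mul]
  all_goals field_simp
  all_goals try simp only [Complex.I_sq]
  all_goals try ring

lemma eval_charpoly' (M : Matrix (Fin 4) (Fin 4) ℂ) (x : ℂ) :
    (M.charpoly).eval x = ((M.charmatrix).map (Polynomial.evalRingHom x)).det := by
  rw [Matrix.charpoly]
  calc eval x (charmatrix M).det = (Polynomial.evalRingHom x) (charmatrix M).det := rfl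
  _ = ((Polynomial.evalRingHom x).mapMatrix (charmatrix M)).det := RingHom.map_det _ _
  _ = ((M.charmatrix).map (Polynomial.evalRingHom x)).det := by rw [RingHom.mapMatrix_apply]

lemma charmatrix_map_eval' (M : Matrix (Fin 4) (Fin 4) ℂ) (x : ℂ) :
    (M.charmatrix).map (Polynomial.evalRingHom x) =
      !![x - M 0 0, -M 0 1, -M 0 2, -M 0 3;
         -M 1 0, x - M 1 1, -M 1 2, -M 1 3;
         -M 2 0, -M 2 1, x - M 2 2, -M 2 3;
         -M 3 0, -M 3 1, -M 3 2, x - M 3 3] := by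
  ext i j
  fin_cases i <;> fin_cases j <;>
    simp [Matrix.charmatrix, Matrix.map_apply, Matrix.sub_apply, Matrix.one_apply]

lemma det_fin_four' (a b c d e f g h i j k l m n o p : ℂ) :
    (!![a,b,c,d; e,f,g,h; i,j,k,l; m,n,o,p]).det =
      a*(f*(k*p-l*o) - g*(j*p-l*n) + h*(j*o-k*n))
      - b*(e*(k*p-l*o) - g*(i*p-l*m) + h*(i*o-k*m))
      + c*(e*(j*p-l*n) - f*(i*p-l*m) + h*(i*n-j*m))
      - d*(e*(j*o-k*n) - f*(i*o-k*m) + g*(i*n-j*m)) := by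
  rw [Matrix.det_succ_row_zero]
  simp [Fin.sum_univ_succ, Matrix.det_fin_three, Matrix.submatrix, Fin.succAbove,
    Fin.castSucc, Fin.castAdd, Fin.castLE]
  ring

/-- The eigenvalues of the normalized average Bob-side state `ρ_B` are
`(1 ± μ₀/(2a₀))/4` and `(1 ± μ₁/(2a₀))/4`, where
`μ₀ = √((a₁+a₂)²+(b₀+b₂)²)`, `μ₁ = √((a₁−a₂)²+(b₀−b₂)²)` and `a₀ = Tr(E)/4`. -/
theorem rhoB_eigenvalues (a0 a1 a2 b0 b2 : ℝ) (ha0 : 0 < a0)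
    (hμ0 : Real.sqrt ((a1 + a2) ^ 2 + (b0 + b2) ^ 2) ≤ a0)
    (hμ1 : Real.sqrt ((a1 - a2) ^ 2 + (b0 - b2) ^ 2) ≤ a0)
    (hE : (fiveParam a0 a1 a2 b0 b2).PosSemidef) :
    (rhoB (fiveParam a0 a1 a2 b0 b2) hE).charpoly =
      (X - C (((1 + Real.sqrt ((a1 + a2) ^ 2 + (b0 + b2) ^ 2) / (2 * a0)) / 4 : ℝ) : ℂ)) *
      (X - C (((1 - Real.sqrt ((a1 + a2) ^ 2 + (b0 + b2) ^ 2) / (2 * a0)) / 4 : ℝ) : ℂ)) *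
      (X - C (((1 + Real.sqrt ((a1 - a2) ^ 2 + (b0 - b2) ^ 2) / (2 * a0)) / 4 : ℝ) : ℂ)) *
      (X - C (((1 - Real.sqrt ((a1 - a2) ^ 2 + (b0 - b2) ^ 2) / (2 * a0)) / 4 : ℝ) : ℂ)) := by
  have ha0' : a0 ≠ 0 := ne_of_gt ha0
  have ha0c : ((a0:ℂ)) ≠ 0 := Complex.ofReal_ne_zero.mpr ha0'
  rw [rhoB_eq' a0 a1 a2 b0 b2 ha0' hE]
  set s0 := Real.sqrt ((a1 + a2) ^ 2 + (b0 + b2) ^ 2) with hs0def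
  set s1 := Real.sqrt ((a1 - a2) ^ 2 + (b0 - b2) ^ 2) with hs1def
  have h0 : s0^2 = (a1 + a2) ^ 2 + (b0 + b2) ^ 2 :=
    Real.sq_sqrt (by positivity)
  have h1 : s1^2 = (a1 - a2) ^ 2 + (b0 - b2) ^ 2 :=
    Real.sq_sqrt (by positivity)
  have hs0 : ((s0:ℂ))^2 = ((a1:ℂ)+(a2:ℂ))^2 + ((b0:ℂ)+(b2:ℂ))^2 := by
    calc ((s0:ℂ))^2 = ((s0^2 : ℝ) : ℂ) := by push_cast; ring
    _ = _ := by rw [h0]; push_cast; ring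
  have hs1 : ((s1:ℂ))^2 = ((a1:ℂ)-(a2:ℂ))^2 + ((b0:ℂ)-(b2:ℂ))^2 := by
    calc ((s1:ℂ))^2 = ((s1^2 : ℝ) : ℂ) := by push_cast; ring
    _ = _ := by rw [h1]; push_cast; ring
  apply Polynomial.funext
  intro x
  rw [eval_charpoly', charmatrix_map_eval', det_fin_four']
  simp only [eval_mul, eval_sub, eval_X, eval_C, Rmat,
    Matrix.cons_val_zero, Matrix.cons_val_one, Matrix.head_cons,
    Matrix.cons_val_two, Matrix.cons_val_three, Matrix.tail_cons, Matrix.cons_val_fin_one,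
    Matrix.of_apply]
  have e0 : (x - (((1 + s0 / (2 * a0)) / 4 : ℝ) : ℂ)) * (x - (((1 - s0 / (2 * a0)) / 4 : ℝ) : ℂ))
      = x^2 - x/2 + 1/16 - (((a1:ℂ)+(a2:ℂ))^2 + ((b0:ℂ)+(b2:ℂ))^2)/(64*(a0:ℂ)^2) := by
    push_cast
    linear_combination (-1/(64*(a0:ℂ)^2)) * hs0
  have e1 : (x - (((1 + s1 / (2 * a0)) / 4 : ℝ) : ℂ)) * (x - (((1 - s1 / (2 * a0)) / 4 : ℝ) : ℂ))
      = x^2 - x/2 + 1/16 - (((a1:ℂ)-(a2:ℂ))^2 + ((b0:ℂ)-(b2:ℂ))^2)/(64*(a0:ℂ)^2) := by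
    push_cast
    linear_combination (-1/(64*(a0:ℂ)^2)) * hs1
  rw [show (x - (((1 + s0 / (2 * a0)) / 4 : ℝ) : ℂ)) * (x - (((1 - s0 / (2 * a0)) / 4 : ℝ) : ℂ)) *
        (x - (((1 + s1 / (2 * a0)) / 4 : ℝ) : ℂ)) * (x - (((1 - s1 / (2 * a0)) / 4 : ℝ) : ℂ))
      = ((x - (((1 + s0 / (2 * a0)) / 4 : ℝ) : ℂ)) * (x - (((1 - s0 / (2 * a0)) / 4 : ℝ) : ℂ))) *
        ((x - (((1 + s1 / (2 * a0)) / 4 : ℝ) : ℂ)) * (x - (((1 - s1 / (2 * a0)) / 4 : ℝ) : ℂ)))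
      from by ring, e0, e1]
  push_cast
  field_simp
  ring
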